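/- Let a, n ∈ ℝ³ with |n| = 1, a not parallel to n, let ε > 0, and let h ∈ C¹(ℝ) with h(0) = 0, ḣ(0) = 0 and ‖ḣ‖_∞ < ε/|a|². Define f : ℝ³ → ℝ by f(x) = x · n + h(x · (a ∧ n)), where a ∧ n is the cross product. Then: (i) f(0) = 0; (ii) ∇f(x) = n + ḣ(x · (a ∧ n)) (a ∧ n) for all x, and in particular ∇f(0) = n; (iii) a · ∇f(x) = a · n for all x; (iv) |∇f(x) − n| < ε/|a| for all x; and (v) if ḣ is not constant, then the map x ↦ ∇f(x)/|∇f(x)| is not constant on the level set Γ = {x ∈ ℝ³ : f(x) = 0}, i.e. Γ is a non-planar C¹ surface. -/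

import Mathlib

open Metric Set MeasureTheory
open scoped RealInnerProductSpace NNReal

noncomputable section

/-- `ℝ^d` with the Euclidean structure. -/
abbrev Euc (d : ℕ) := EuclideanSpace ℝ (Fin d)

/-- The cross (vector) product `a ∧ b` in `ℝ³`. -/
def cross3 (a b : Euc 3) : Euc 3 :=
  (WithLp.equiv 2 (Fin 3 → ℝ)).symm
    ![a 1 * b 2 - a 2 * b 1, a 2 * b 0 - a 0 * b 2, a 0 * b 1 - a 1 * b 0]

/-- The function `f(x) = x · n + h(x · (a ∧ n))`. -/
def f7 (a n : Euc 3) (h : ℝ → ℝ) (x : Euc 3) : ℝ :=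
  ⟪x, n⟫ + h ⟪x, cross3 a n⟫

lemma inner3 (x y : Euc 3) : ⟪x, y⟫ = x 0 * y 0 + x 1 * y 1 + x 2 * y 2 := by
  simp [PiLp.inner_apply, Fin.sum_univ_three, RCLike.inner_apply]; ring

lemma cross3_apply0 (a b : Euc 3) : cross3 a b 0 = a 1 * b 2 - a 2 * b 1 := by
  simp [cross3]
lemma cross3_apply1 (a b : Euc 3) : cross3 a b 1 = a 2 * b 0 - a 0 * b 2 := by
  simp [cross3]
lemma cross3_apply2 (a b : Euc 3) : cross3 a b 2 = a 0 * b 1 - a 1 * b 0 := by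
  simp [cross3]

lemma grad7 (a n : Euc 3) (h : ℝ → ℝ) (hh : ContDiff ℝ 1 h) (x : Euc 3) :
    HasGradientAt (f7 a n h) (n + deriv h ⟪x, cross3 a n⟫ • cross3 a n) x := by
  set c := cross3 a n
  have d1 : HasFDerivAt (fun y : Euc 3 => ⟪y, n⟫) (innerSL ℝ n) x := by
    have : (fun y : Euc 3 => ⟪y, n⟫) = innerSL ℝ n := by
      funext y; simp [real_inner_comm]
    rw [this]; exact (innerSL ℝ n).hasFDerivAt
  have d2' : HasFDerivAt (fun y : Euc 3 => ⟪y, c⟫) (innerSL ℝ c) x := by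
    have : (fun y : Euc 3 => ⟪y, c⟫) = innerSL ℝ c := by
      funext y; simp [real_inner_comm]
    rw [this]; exact (innerSL ℝ c).hasFDerivAt
  have hd : HasDerivAt h (deriv h ⟪x, c⟫) ⟪x, c⟫ :=
    (hh.differentiable one_ne_zero).differentiableAt.hasDerivAt
  have d2 : HasFDerivAt (fun y : Euc 3 => h ⟪y, c⟫)
      (deriv h ⟪x, c⟫ • innerSL ℝ c) x := hd.comp_hasFDerivAt x d2'
  have dsum := d1.add d2
  rw [hasGradientAt_iff_hasFDerivAt]
  refine dsum.congr_fderiv ?_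
  ext y
  simp [inner_add_left, inner_smul_left, real_inner_comm]

/-- For `f(x) = x · n + h(x · (a ∧ n))` with `|n| = 1`, `a` not parallel
to `n`, `h ∈ C¹(ℝ)`, `h(0) = ḣ(0) = 0` and `‖ḣ‖_∞ < ε/|a|²`:
(i) `f(0) = 0`; (ii) `∇f(x) = n + ḣ(x · (a ∧ n)) (a ∧ n)`, in particular `∇f(0) = n`;
(iii) `a · ∇f(x) = a · n`; (iv) `|∇f(x) - n| < ε/|a|`; and (v) if `ḣ` is not constant
then `x ↦ ∇f(x)/|∇f(x)|` is not constant on the level set `{f = 0}`. -/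
theorem statement7 (a n : Euc 3) (hn : ‖n‖ = 1) (hpar : ¬∃ c : ℝ, a = c • n)
    (ε : ℝ) (hε : 0 < ε) (h : ℝ → ℝ) (hh : ContDiff ℝ 1 h)
    (h0 : h 0 = 0) (h0' : deriv h 0 = 0)
    (hsup : ∃ M : ℝ, (∀ t : ℝ, |deriv h t| ≤ M) ∧ M < ε / ‖a‖ ^ 2) :
    f7 a n h 0 = 0 ∧
    (∀ x : Euc 3, gradient (f7 a n h) x
      = n + deriv h ⟪x, cross3 a n⟫ • cross3 a n) ∧
    gradient (f7 a n h) 0 = n ∧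
    (∀ x : Euc 3, ⟪a, gradient (f7 a n h) x⟫ = ⟪a, n⟫) ∧
    (∀ x : Euc 3, ‖gradient (f7 a n h) x - n‖ < ε / ‖a‖) ∧
    ((¬∃ c : ℝ, ∀ t : ℝ, deriv h t = c) →
      ¬∃ ν : Euc 3, ∀ x : Euc 3, f7 a n h x = 0 →
        ‖gradient (f7 a n h) x‖⁻¹ • gradient (f7 a n h) x = ν) := by
  set c := cross3 a n with hc
  -- basic inner product facts
  have hnn : ⟪n, n⟫ = 1 := by
    rw [real_inner_self_eq_norm_sq, hn]; norm_num
  have hnn3 : n 0 ^ 2 + n 1 ^ 2 + n 2 ^ 2 = 1 := by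
    have := hnn; rw [inner3] at this; nlinarith [this]
  have hnc : ⟪n, c⟫ = 0 := by
    rw [inner3, hc, cross3_apply0, cross3_apply1, cross3_apply2]; ring
  have hac : ⟪a, c⟫ = 0 := by
    rw [inner3, hc, cross3_apply0, cross3_apply1, cross3_apply2]; ring
  have hlag : ⟪c, c⟫ = ⟪a, a⟫ * ⟪n, n⟫ - ⟪a, n⟫ ^ 2 := by
    rw [inner3, inner3, inner3, inner3, hc,
      cross3_apply0, cross3_apply1, cross3_apply2]; ring
  have hcn : ⟪c, n⟫ = 0 := by rw [real_inner_comm]; exact hnc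
  have hane : a ≠ 0 := by
    rintro rfl; exact hpar ⟨0, by simp⟩
  have hapos : 0 < ‖a‖ := norm_pos_iff.mpr hane
  have hcne : c ≠ 0 := by
    intro hc0
    apply hpar
    refine ⟨⟪a, n⟫, ?_⟩
    have e0 : a 1 * n 2 - a 2 * n 1 = 0 := by
      rw [← cross3_apply0 a n, ← hc, hc0]; rfl
    have e1 : a 2 * n 0 - a 0 * n 2 = 0 := by
      rw [← cross3_apply1 a n, ← hc, hc0]; rfl
    have e2 : a 0 * n 1 - a 1 * n 0 = 0 := by
      rw [← cross3_apply2 a n, ← hc, hc0]; rfl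
    ext i
    have hsm : ∀ j : Fin 3, (⟪a, n⟫ • n) j = ⟪a, n⟫ * n j := fun j => rfl
    fin_cases i <;> rw [hsm] <;> rw [inner3]
    · show a 0 = (a 0 * n 0 + a 1 * n 1 + a 2 * n 2) * n 0
      linear_combination (-(a 0)) * hnn3 + n 1 * e2 - n 2 * e1
    · show a 1 = (a 0 * n 0 + a 1 * n 1 + a 2 * n 2) * n 1
      linear_combination (-(a 1)) * hnn3 - n 0 * e2 + n 2 * e0
    · show a 2 = (a 0 * n 0 + a 1 * n 1 + a 2 * n 2) * n 2
      linear_combination (-(a 2)) * hnn3 + n 0 * e1 - n 1 * e0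
  have hccpos : 0 < ⟪c, c⟫ := by
    rw [real_inner_self_eq_norm_sq]
    exact pow_pos (norm_pos_iff.mpr hcne) 2
  have hcle : ‖c‖ ≤ ‖a‖ := by
    have h1 : ‖c‖ ^ 2 ≤ ‖a‖ ^ 2 := by
      rw [← real_inner_self_eq_norm_sq, ← real_inner_self_eq_norm_sq, hlag, hnn]
      nlinarith [sq_nonneg (⟪a, n⟫ : ℝ)]
    nlinarith [norm_nonneg c, norm_nonneg a]
  -- gradient formula
  have hgrad : ∀ x : Euc 3, gradient (f7 a n h) x = n + deriv h ⟪x, c⟫ • c :=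
    fun x => (grad7 a n h hh x).gradient
  obtain ⟨M, hM, hMlt⟩ := hsup
  have hM0 : 0 ≤ M := (abs_nonneg _).trans (hM 0)
  refine ⟨?_, hgrad, ?_, ?_, ?_, ?_⟩
  · simp [f7, h0]
  · rw [hgrad 0]; simp [h0']
  · intro x
    rw [hgrad x, inner_add_right, inner_smul_right, hac]; ring
  · intro x
    rw [hgrad x]
    rw [add_sub_cancel_left, norm_smul, Real.norm_eq_abs]
    calc |deriv h ⟪x, c⟫| * ‖c‖ ≤ M * ‖a‖ := by
          apply mul_le_mul (hM _) hcle (norm_nonneg _) hM0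
      _ < (ε / ‖a‖ ^ 2) * ‖a‖ := by
          exact mul_lt_mul_of_pos_right hMlt hapos
      _ = ε / ‖a‖ := by field_simp
  · rintro hnconst ⟨ν, hν⟩
    push_neg at hnconst
    obtain ⟨t₂, ht₂⟩ := hnconst (deriv h 0)
    -- points on the level set
    set X : ℝ → Euc 3 := fun t => (-(h t)) • n + (t / ⟪c, c⟫) • c with hX
    have hXc : ∀ t, ⟪X t, c⟫ = t := by
      intro t
      rw [hX]
      simp only [inner_add_left, real_inner_smul_left, hnc, mul_zero, neg_zero,
        zero_add, neg_mul]
      exact div_mul_cancel₀ t hccpos.ne'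
    have hXn : ∀ t, ⟪X t, n⟫ = -(h t) := by
      intro t
      rw [hX]
      simp only [inner_add_left, real_inner_smul_left, hcn, hnn]
      ring
    have hXlevel : ∀ t, f7 a n h (X t) = 0 := by
      intro t
      rw [f7, ← hc, hXc, hXn]; ring
    set g : ℝ → Euc 3 := fun t => n + deriv h t • c with hg
    have hgx : ∀ t, gradient (f7 a n h) (X t) = g t := by
      intro t; rw [hgrad (X t), hXc]
    have hgn : ∀ t, ⟪n, g t⟫ = 1 := by
      intro t; rw [hg]
      simp only [inner_add_right, real_inner_smul_right, hnc, hnn]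
      ring
    have hgc : ∀ t, ⟪c, g t⟫ = deriv h t * ⟪c, c⟫ := by
      intro t; rw [hg]
      simp only [inner_add_right, real_inner_smul_right, hcn]
      ring
    have hgne : ∀ t, g t ≠ 0 := by
      intro t h0g
      have := hgn t
      rw [h0g, inner_zero_right] at this
      norm_num at this
    have hnu : ∀ t, ‖g t‖⁻¹ • g t = ν := by
      intro t
      rw [← hgx t]
      exact hν (X t) (hXlevel t)
    -- inner with n gives equality of inverse norms
    have key : ∀ t, ‖g t‖⁻¹ = ⟪n, ν⟫ := by
      intro t
      rw [← hnu t, inner_smul_right, hgn t, mul_one]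
    have hnorm : ‖g t₂‖⁻¹ = ‖g 0‖⁻¹ := by rw [key t₂, key 0]
    have hpos : ∀ t, 0 < ‖g t‖⁻¹ :=
      fun t => inv_pos.mpr (norm_pos_iff.mpr (hgne t))
    -- inner with c
    have key2 : ∀ t, ‖g t‖⁻¹ * (deriv h t * ⟪c, c⟫) = ⟪c, ν⟫ := by
      intro t
      rw [← hnu t, inner_smul_right, hgc t]
    have heq := (key2 t₂).trans (key2 0).symm
    rw [hnorm] at heq
    have hne : ‖g 0‖⁻¹ ≠ 0 := (hpos 0).ne'
    have h2 := mul_left_cancel₀ hne heq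
    exact ht₂ (mul_right_cancel₀ hccpos.ne' h2)

end
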